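/- Let S be an additively written Ore monoid with group of left fractions G = −S+S, let A be the centre of S, and let Π be a group. Suppose given, for each x ∈ Π, an automorphism φ(x) of S with φ(1) = id, and, for each pair x,y ∈ Π, an invertible element f(x,y) of S with f(x,1) = 0 = f(1,y) and φ(x)∘φ(y) = μ_{f(x,y)}∘φ(xy). Let φ̃(x) denote the extension of φ(x) to an automorphism of G. If a function k: Π × Π × Π → Z(G) into the centre of G satisfies φ̃(x)(f(y,z)) + f(x,yz) = k(x,y,z) + f(x,y) + f(xy,z) for all x,y,z ∈ Π, then every value k(x,y,z) lies in U(A), i.e., is an invertible element of S belonging to the centre of S. -/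

import Mathlib

universe u

/-- The multiplicative group structure on `AddAut A` (multiplication is composition), as in
the older Mathlib, where `AddAut A` carried a `Group` instance. -/
instance AddAut.group (A : Type*) [Add A] : Group (AddAut A) where
  mul g h := AddEquiv.trans h g
  one := AddEquiv.refl _
  inv := AddEquiv.symm
  mul_assoc _ _ _ := rfl
  one_mul _ := rfl
  mul_one _ := rfl
  inv_mul_cancel := AddEquiv.self_trans_symm

section InnerAutomorphisms

variable {N : Type u} [AddMonoid N]

/-- The inner automorphism `μ_u : s ↦ u + s − u` of an additively written (not
necessarily commutative) monoid `N` induced by an invertible element `u` of `N`. -/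
def innerAddAut (u : AddUnits N) : AddAut N where
  toFun s := ↑u + s + ↑(-u)
  invFun s := ↑(-u) + s + ↑u
  left_inv s := by
    simp only [← add_assoc, AddUnits.neg_add, zero_add]
    rw [add_assoc, AddUnits.neg_add, add_zero]
  right_inv s := by
    simp only [← add_assoc, AddUnits.add_neg, zero_add]
    rw [add_assoc, AddUnits.add_neg, add_zero]
  map_add' s t := by
    have : (↑(-u) + (↑u + t)) = t := by
      rw [← add_assoc, AddUnits.neg_add, zero_add]
    simp only [← add_assoc]
    rw [add_assoc (↑u + s) (↑(-u)) (↑u), AddUnits.neg_add, add_zero]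

/-- The group `In(N)` of inner automorphisms of `N`, a subgroup of `Aut(N)`. -/
def innerAddAuts (N : Type u) [AddMonoid N] : Subgroup (AddAut N) where
  carrier := {φ | ∃ u : AddUnits N, φ = innerAddAut u}
  one_mem' := ⟨0, by ext s; simp [innerAddAut]; rfl⟩
  mul_mem' := by
    rintro φ ψ ⟨u, rfl⟩ ⟨v, rfl⟩
    refine ⟨u + v, ?_⟩
    ext s
    show innerAddAut u (innerAddAut v s) = innerAddAut (u + v) s
    simp only [innerAddAut, AddEquiv.coe_mk, Equiv.coe_fn_mk, neg_add_rev,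
      AddUnits.val_add]
    simp only [← add_assoc]
  inv_mem' := by
    rintro φ ⟨u, rfl⟩
    refine ⟨-u, ?_⟩
    ext s
    show (innerAddAut u).symm s = innerAddAut (-u) s
    simp only [innerAddAut, AddEquiv.symm_mk, AddEquiv.coe_mk, Equiv.coe_fn_mk, neg_neg]
    rfl

end InnerAutomorphisms

instance innerAddAuts_normal (N : Type u) [AddMonoid N] : (innerAddAuts N).Normal where
  conj_mem := by
    rintro φ ⟨u, rfl⟩ ψ
    refine ⟨AddUnits.map (ψ : N ≃+ N).toAddMonoidHom u, ?_⟩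
    ext s
    show ψ (innerAddAut u (ψ⁻¹ s)) = innerAddAut (AddUnits.map (ψ : N ≃+ N).toAddMonoidHom u) s
    simp only [innerAddAut, AddEquiv.coe_mk, Equiv.coe_fn_mk, map_add]
    rw [← map_neg (AddUnits.map (AddEquiv.toAddMonoidHom ψ)) u]
    rw [AddUnits.coe_map, AddUnits.coe_map]
    have hs : ψ (ψ⁻¹ s) = s := ψ.apply_symm_apply s
    rw [hs]
    rfl

/-- Let `S` be an additively written Ore monoid with group of left fractions `G = −S + S`
(formalized as: `S` is a submonoid of a group `G` every element of which has the form
`−s₁ + s₂` with `s₁, s₂ ∈ S`), and let `Π` be a group.  Suppose given, for each `x ∈ Π`,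
an automorphism `φ x` of `S` with `φ 1 = id`, and, for each pair `x, y`, an invertible
element `f x y` of `S` with `f x 1 = 0 = f 1 y` and `φ x ∘ φ y = μ_{f x y} ∘ φ (x*y)`.
Let `φ̃ x` denote the extension of `φ x` to an automorphism of `G` (an automorphism of
`G` restricting to `φ x` on `S`).  If a function `k : Π × Π × Π → Z(G)` into the centre
of `G` satisfies `φ̃ x (f y z) + f x (y*z) = k x y z + f x y + f (x*y) z` for all
`x, y, z ∈ Π`, then every value `k x y z` lies in `U(A)`:  it is (the image in `G` of) an
invertible element of `S` belonging to the centre `A` of `S`. -/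
theorem obstruction_cocycle_mem_units_center {G : Type u} [AddGroup G] (S : AddSubmonoid G)
    (hfrac : ∀ g : G, ∃ s₁ s₂ : S, g = -(s₁ : G) + (s₂ : G))
    {P : Type*} [Group P]
    (φ : P → AddAut S) (hφ1 : φ 1 = 1)
    (f : P → P → AddUnits S)
    (hfr : ∀ x : P, f x 1 = 0) (hfl : ∀ y : P, f 1 y = 0)
    (hcomp : ∀ x y : P, φ x * φ y = innerAddAut (f x y) * φ (x * y))
    (φt : P → AddAut G)
    (hext : ∀ (x : P) (s : S), φt x (s : G) = ((φ x s : S) : G))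
    (k : P → P → P → G)
    (hkc : ∀ x y z : P, k x y z ∈ AddSubgroup.center G)
    (hk : ∀ x y z : P,
      φt x (((f y z : S) : G)) + ((f x (y * z) : S) : G)
        = k x y z + ((f x y : S) : G) + ((f (x * y) z : S) : G)) :
    ∀ x y z : P, ∃ a : S,
      IsAddUnit a ∧ (∀ s : S, a + s = s + a) ∧ (a : G) = k x y z := by
  intro x y z
  -- coercion of the negative of an AddUnit of S is the negative in G
  have hneg : ∀ u : AddUnits S, ((↑(-u) : S) : G) = -((u : S) : G) := by
    intro u
    have h0 : ((↑(-u) : S) : G) + ((u : S) : G) = 0 := by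
      rw [← AddSubmonoid.coe_add, AddUnits.neg_add, AddSubmonoid.coe_zero]
    exact eq_neg_of_add_eq_zero_left h0
  set u : AddUnits S :=
    AddUnits.map ((φ x : S ≃+ S).toAddMonoidHom) (f y z) + f x (y * z)
      + (-(f (x * y) z)) + (-(f x y)) with hu
  refine ⟨(u : S), ⟨u, rfl⟩, ?_, ?_⟩
  · -- the image of u in G is k x y z
    have hcoe : ((u : S) : G) = k x y z := by
      have h1 : ((AddUnits.map ((φ x : S ≃+ S).toAddMonoidHom) (f y z) : S) : G)
          = φt x ((f y z : S) : G) := by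
        rw [hext x (f y z : S)]
        rfl
      have := hk x y z
      calc ((u : S) : G)
          = φt x ((f y z : S) : G) + ((f x (y * z) : S) : G)
            + (-((f (x * y) z : S) : G)) + (-((f x y : S) : G)) := by
            rw [hu]
            push_cast [AddSubmonoid.coe_add]
            rw [h1, hneg, hneg]
        _ = (k x y z + ((f x y : S) : G) + ((f (x * y) z : S) : G))
            + (-((f (x * y) z : S) : G)) + (-((f x y : S) : G)) := by rw [this]
        _ = k x y z := by rw [add_neg_cancel_right, add_neg_cancel_right]
    refine fun s => ?_
    · -- centrality in S follows from centrality of k in G and injectivity of the coercion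
      have hc := (AddSubgroup.mem_center_iff.mp (hkc x y z)) (s : G)
      apply Subtype.ext
      push_cast [AddSubmonoid.coe_add]
      rw [hcoe, ← hc]
  · have h1 : ((AddUnits.map ((φ x : S ≃+ S).toAddMonoidHom) (f y z) : S) : G)
        = φt x ((f y z : S) : G) := by
      rw [hext x (f y z : S)]
      rfl
    have := hk x y z
    calc ((u : S) : G)
        = φt x ((f y z : S) : G) + ((f x (y * z) : S) : G)
          + (-((f (x * y) z : S) : G)) + (-((f x y : S) : G)) := by
          rw [hu]
          push_cast [AddSubmonoid.coe_add]
          rw [h1, hneg, hneg]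
      _ = (k x y z + ((f x y : S) : G) + ((f (x * y) z : S) : G))
          + (-((f (x * y) z : S) : G)) + (-((f x y : S) : G)) := by rw [this]
      _ = k x y z := by rw [add_neg_cancel_right, add_neg_cancel_right]
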